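/- Let 1 < p < d. Then for all functions u in the homogeneous Sobolev space (e.g., u Schwartz on ℝ^d), the L^p norm of |x|^{-1} u(x) is bounded by a constant (depending on p, d) times the L^p norm of the gradient ∇u. -/

import Mathlib

open MeasureTheory Set
open scoped ENNReal

noncomputable section

abbrev Euc (d : ℕ) := EuclideanSpace ℝ (Fin d)

lemma scaling_lemma {d : ℕ} (G : Euc d → ℝ≥0∞) (hG : Measurable G) {t : ℝ} (ht : 0 < t) :
    ∫⁻ x, G (t • x) = ENNReal.ofReal (t ^ (-(d:ℝ))) * ∫⁻ x, G x := by
  rw [← lintegral_map hG (measurable_const_smul t),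
    Measure.map_addHaar_smul volume (ne_of_gt ht), lintegral_smul_measure]
  congr 1
  rw [finrank_euclideanSpace_fin]
  rw [abs_of_nonneg (by positivity), ← Real.rpow_natCast t d, ← Real.rpow_neg ht.le]

lemma const_lemma {β : ℝ} (hβ : β < -1) :
    ∫⁻ t in Ioi (1:ℝ), ENNReal.ofReal (t ^ β) =
      ENNReal.ofReal (∫ t in Ioi (1:ℝ), t ^ β) := by
  rw [MeasureTheory.ofReal_integral_eq_lintegral_ofReal
    (integrableOn_Ioi_rpow_of_lt hβ one_pos)]
  filter_upwards [ae_restrict_mem measurableSet_Ioi] with t ht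
  exact Real.rpow_nonneg (le_of_lt (lt_trans one_pos ht)) _

lemma pointwise_lemma {d : ℕ} (u : SchwartzMap (Euc d) ℂ) {x : Euc d} (hx : x ≠ 0) :
    (‖(‖x‖⁻¹ • u x)‖₊ : ℝ≥0∞) ≤ ∫⁻ t in Ioi (1:ℝ), (‖fderiv ℝ u (t • x)‖₊ : ℝ≥0∞) := by
  have hxn : 0 < ‖x‖ := norm_pos_iff.2 hx
  have hud : Differentiable ℝ u := (u.smooth ⊤).differentiable (by simp)
  have hDc : Continuous fun y : Euc d => fderiv ℝ u y :=
    (u.smooth ⊤).continuous_fderiv (by simp)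
  set φ' : ℝ → ℂ := fun t => fderiv ℝ u (t • x) x with hφ'
  have hderiv : ∀ t ∈ Ici (1:ℝ), HasDerivAt (fun s : ℝ => u (s • x)) (φ' t) t := by
    intro t _
    have h1 : HasDerivAt (fun s : ℝ => s • x) ((1:ℝ) • x) t := (hasDerivAt_id t).smul_const x
    have := (hud (t • x)).hasFDerivAt.comp_hasDerivAt t h1
    simp only [one_smul] at this
    exact this
  obtain ⟨C2, -, hC2⟩ := ((SchwartzMap.fderivCLM ℝ (Euc d) ℂ) u).decay 2 0
  have hD2 : ∀ y : Euc d, ‖y‖ ^ 2 * ‖fderiv ℝ u y‖ ≤ C2 := by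
    intro y
    simpa [norm_iteratedFDeriv_zero, SchwartzMap.fderivCLM_apply] using hC2 y
  obtain ⟨C1, -, hC1⟩ := u.decay 1 0
  have hD1 : ∀ y : Euc d, ‖y‖ * ‖u y‖ ≤ C1 := by
    intro y
    simpa [norm_iteratedFDeriv_zero] using hC1 y
  have hφ'c : Continuous φ' :=
    (hDc.comp (continuous_id.smul continuous_const)).clm_apply continuous_const
  have hint : IntegrableOn φ' (Ioi (1:ℝ)) := by
    have hbound : IntegrableOn (fun t : ℝ => (C2 / ‖x‖) * t ^ (-2:ℝ)) (Ioi 1) :=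
      (integrableOn_Ioi_rpow_of_lt (by norm_num) one_pos).const_mul _
    refine Integrable.mono' hbound hφ'c.aestronglyMeasurable ?_
    filter_upwards [ae_restrict_mem measurableSet_Ioi] with t ht
    have ht0 : 0 < t := lt_trans one_pos ht
    have hsm : ‖t • x‖ = t * ‖x‖ := by
      rw [norm_smul, Real.norm_eq_abs, abs_of_pos ht0]
    have hpos : 0 < ‖t • x‖ ^ 2 := by rw [hsm]; positivity
    have hD : ‖fderiv ℝ u (t • x)‖ ≤ C2 / ‖t • x‖ ^ 2 := by
      rw [le_div_iff₀ hpos, mul_comm]; exact hD2 (t • x)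
    have ht2 : t ^ (-2:ℝ) = (t ^ 2)⁻¹ := by
      rw [Real.rpow_neg ht0.le, show ((2:ℝ)) = ((2:ℕ):ℝ) by norm_num, Real.rpow_natCast]
    calc ‖φ' t‖ ≤ ‖fderiv ℝ u (t • x)‖ * ‖x‖ := ContinuousLinearMap.le_opNorm _ _
      _ ≤ (C2 / ‖t • x‖ ^ 2) * ‖x‖ := by gcongr
      _ = (C2 / ‖x‖) * t ^ (-2:ℝ) := by rw [ht2, hsm]; field_simp
  have htend : Filter.Tendsto (fun t : ℝ => u (t • x)) Filter.atTop (nhds 0) := by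
    apply squeeze_zero_norm' (a := fun t : ℝ => (C1 / ‖x‖) * t⁻¹)
    · filter_upwards [Filter.eventually_gt_atTop (0:ℝ)] with t ht0
      have hsm : ‖t • x‖ = t * ‖x‖ := by
        rw [norm_smul, Real.norm_eq_abs, abs_of_pos ht0]
      have h := hD1 (t • x)
      rw [hsm] at h
      calc ‖u (t • x)‖ ≤ C1 / (t * ‖x‖) := by
            rw [le_div_iff₀ (by positivity)]
            linarith [h, mul_comm (‖u (t • x)‖) (t * ‖x‖)]
        _ = C1 / ‖x‖ * t⁻¹ := by
            rw [mul_comm t, div_mul_eq_div_div, div_eq_mul_inv]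
    · have := (tendsto_inv_atTop_zero (𝕜 := ℝ)).const_mul (C1 / ‖x‖)
      simpa using this
  have key : ∫ t in Ioi (1:ℝ), φ' t = -(u x) := by
    have := integral_Ioi_of_hasDerivAt_of_tendsto' hderiv hint htend
    simpa using this
  set N : ℝ≥0∞ := ∫⁻ t in Ioi (1:ℝ), (‖fderiv ℝ u (t • x)‖₊ : ℝ≥0∞) with hN
  have h1 : (‖u x‖₊ : ℝ≥0∞) ≤ N * (‖x‖₊ : ℝ≥0∞) := by
    calc (‖u x‖₊ : ℝ≥0∞) = (‖∫ t in Ioi (1:ℝ), φ' t‖₊ : ℝ≥0∞) := by rw [key]; simp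
      _ ≤ ∫⁻ t in Ioi (1:ℝ), (‖φ' t‖₊ : ℝ≥0∞) := enorm_integral_le_lintegral_enorm _
      _ ≤ ∫⁻ t in Ioi (1:ℝ), (‖fderiv ℝ u (t • x)‖₊ : ℝ≥0∞) * (‖x‖₊ : ℝ≥0∞) := by
          refine lintegral_mono fun t => ?_
          rw [← ENNReal.coe_mul]
          exact ENNReal.coe_le_coe.2 (ContinuousLinearMap.le_opNNNorm _ _)
      _ = N * (‖x‖₊ : ℝ≥0∞) := lintegral_mul_const' _ _ ENNReal.coe_ne_top
  have hx0 : (‖x‖₊ : ℝ≥0∞) ≠ 0 := by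
    simpa using (nnnorm_ne_zero_iff.2 hx)
  have hnn : (‖(‖x‖⁻¹ • u x)‖₊ : ℝ≥0∞) = (‖x‖₊ : ℝ≥0∞)⁻¹ * (‖u x‖₊ : ℝ≥0∞) := by
    rw [nnnorm_smul, nnnorm_inv, nnnorm_norm, ENNReal.coe_mul,
      ENNReal.coe_inv (nnnorm_ne_zero_iff.2 hx)]
  rw [hnn]
  calc (‖x‖₊ : ℝ≥0∞)⁻¹ * (‖u x‖₊ : ℝ≥0∞) ≤ (‖x‖₊ : ℝ≥0∞)⁻¹ * (N * (‖x‖₊ : ℝ≥0∞)) :=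
        by gcongr
    _ = N * ((‖x‖₊ : ℝ≥0∞)⁻¹ * (‖x‖₊ : ℝ≥0∞)) := by ring
    _ = N := by rw [ENNReal.inv_mul_cancel hx0 ENNReal.coe_ne_top, mul_one]

/-- Hardy's inequality: for `1 < p < d`,
`‖ |x|⁻¹ u ‖_{L^p(ℝ^d)} ≲ ‖ ∇u ‖_{L^p(ℝ^d)}` for Schwartz functions `u`. -/
theorem hardy_inequality (d : ℕ) (p : ℝ) (hp : 1 < p) (hpd : p < d) :
    ∃ C : ℝ, 0 < C ∧ ∀ u : SchwartzMap (Euc d) ℂ,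
      eLpNorm (fun x : Euc d => ‖x‖⁻¹ • u x) (ENNReal.ofReal p) volume
        ≤ ENNReal.ofReal C *
          eLpNorm (fun x : Euc d => fderiv ℝ u x) (ENNReal.ofReal p) volume := by
  have hp0 : (0:ℝ) < p := lt_trans one_pos hp
  have hp0' : p ≠ 0 := ne_of_gt hp0
  have hp1 : p - 1 ≠ 0 := by intro h; nlinarith [h]
  set q : ℝ := p / (p - 1) with hq
  have hpq : p.HolderConjugate q := Real.HolderConjugate.conjExponent hp
  have hqpos : 0 < q := div_pos hp0 (by linarith)
  set α : ℝ := (p + d) / 2 - 1 with hα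
  have hd1 : (1:ℝ) < d := lt_trans hp hpd
  have hαgt : p - 1 < α := by rw [hα]; linarith
  have hαlt : α < d - 1 := by rw [hα]; linarith
  set β : ℝ := -(α / p) * q with hβdef
  have hβ : β < -1 := by
    have h1 : β = -(α / (p - 1)) := by rw [hβdef, hq]; field_simp
    rw [h1]
    have h2 : 1 < α / (p - 1) := (one_lt_div (by linarith)).2 hαgt
    linarith
  set γ : ℝ := α - d with hγdef
  have hγ : γ < -1 := by rw [hγdef]; linarith
  set B : ℝ≥0∞ := ∫⁻ t in Ioi (1:ℝ), ENNReal.ofReal (t ^ β) with hBdef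
  have hBne : B ≠ ⊤ := by rw [hBdef, const_lemma hβ]; exact ENNReal.ofReal_ne_top
  set Cg : ℝ≥0∞ := ∫⁻ t in Ioi (1:ℝ), ENNReal.ofReal (t ^ γ) with hCgdef
  have hCgne : Cg ≠ ⊤ := by rw [hCgdef, const_lemma hγ]; exact ENNReal.ofReal_ne_top
  have hBpqne : B ^ (p / q) ≠ ⊤ :=
    ENNReal.rpow_ne_top_of_nonneg (div_nonneg hp0.le hqpos.le) hBne
  set K : ℝ≥0∞ := (B ^ (p / q) * Cg) ^ (1 / p) with hK
  have hKne : K ≠ ⊤ :=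
    ENNReal.rpow_ne_top_of_nonneg (by positivity) (ENNReal.mul_ne_top hBpqne hCgne)
  refine ⟨K.toReal + 1, by positivity, fun u => ?_⟩
  haveI : Nontrivial (Euc d) := Module.nontrivial_of_finrank_pos (R := ℝ)
    (by rw [finrank_euclideanSpace_fin]; exact Nat.cast_pos.mp (lt_trans hp0 hpd))
  haveI := Module.punctured_nhds_neBot ℝ (Euc d)
  set D : Euc d → (Euc d →L[ℝ] ℂ) := fun y => fderiv ℝ u y with hD
  have hDc : Continuous D := (u.smooth ⊤).continuous_fderiv (by simp)
  have hDm : Measurable fun y => (‖D y‖₊ : ℝ≥0∞) := hDc.measurable.nnnorm.coe_nnreal_ennreal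
  set I : ℝ≥0∞ := ∫⁻ y, (‖D y‖₊ : ℝ≥0∞) ^ p with hI
  set N : Euc d → ℝ≥0∞ := fun x => ∫⁻ t in Ioi (1:ℝ), (‖D (t • x)‖₊ : ℝ≥0∞) with hNdef
  set A : Euc d → ℝ≥0∞ := fun x =>
    ∫⁻ t in Ioi (1:ℝ), (‖D (t • x)‖₊ : ℝ≥0∞) ^ p * ENNReal.ofReal (t ^ α) with hAdef
  -- Hölder in `t`
  have holder : ∀ x : Euc d, N x ^ p ≤ B ^ (p / q) * A x := by
    intro x
    have hmeas1 : Measurable fun t : ℝ => (‖D (t • x)‖₊ : ℝ≥0∞) :=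
      (hDc.comp (continuous_id.smul continuous_const)).measurable.nnnorm.coe_nnreal_ennreal
    set f : ℝ → ℝ≥0∞ := fun t => (‖D (t • x)‖₊ : ℝ≥0∞) * ENNReal.ofReal (t ^ (α / p)) with hf
    set g : ℝ → ℝ≥0∞ := fun t => ENNReal.ofReal (t ^ (-(α / p))) with hg
    have hmeasf : AEMeasurable f (volume.restrict (Ioi 1)) :=
      (hmeas1.mul (ENNReal.measurable_ofReal.comp (measurable_id.pow_const _))).aemeasurable
    have hmeasg : AEMeasurable g (volume.restrict (Ioi 1)) :=
      (ENNReal.measurable_ofReal.comp (measurable_id.pow_const _)).aemeasurable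
    have key := ENNReal.lintegral_mul_le_Lp_mul_Lq (volume.restrict (Ioi 1)) hpq hmeasf hmeasg
    have hfg : ∫⁻ t in Ioi (1:ℝ), (f * g) t = N x := by
      refine lintegral_congr_ae ?_
      filter_upwards [ae_restrict_mem measurableSet_Ioi] with t ht
      have ht0 : (0:ℝ) < t := lt_trans one_pos ht
      simp only [Pi.mul_apply, hf, hg]
      rw [mul_assoc, ← ENNReal.ofReal_mul (Real.rpow_nonneg ht0.le _), ← Real.rpow_add ht0]
      simp
    have hfp : ∫⁻ t in Ioi (1:ℝ), f t ^ p = A x := by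
      refine lintegral_congr_ae ?_
      filter_upwards [ae_restrict_mem measurableSet_Ioi] with t ht
      have ht0 : (0:ℝ) < t := lt_trans one_pos ht
      simp only [hf]
      rw [ENNReal.mul_rpow_of_nonneg _ _ hp0.le,
        ENNReal.ofReal_rpow_of_pos (Real.rpow_pos_of_pos ht0 _),
        ← Real.rpow_mul ht0.le, div_mul_cancel₀ _ hp0']
    have hgq : ∫⁻ t in Ioi (1:ℝ), g t ^ q = B := by
      rw [hBdef]
      refine lintegral_congr_ae ?_
      filter_upwards [ae_restrict_mem measurableSet_Ioi] with t ht
      have ht0 : (0:ℝ) < t := lt_trans one_pos ht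
      simp only [hg]
      rw [ENNReal.ofReal_rpow_of_pos (Real.rpow_pos_of_pos ht0 _),
        ← Real.rpow_mul ht0.le, hβdef]
    have hNle : N x ≤ A x ^ (1 / p) * B ^ (1 / q) := by
      calc N x = ∫⁻ t in Ioi (1:ℝ), (f * g) t := hfg.symm
        _ ≤ (∫⁻ t in Ioi (1:ℝ), f t ^ p) ^ (1/p) * (∫⁻ t in Ioi (1:ℝ), g t ^ q) ^ (1/q) := key
        _ = A x ^ (1 / p) * B ^ (1 / q) := by rw [hfp, hgq]
    calc N x ^ p ≤ (A x ^ (1/p) * B ^ (1/q)) ^ p := ENNReal.rpow_le_rpow hNle hp0.le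
      _ = B ^ (p / q) * A x := by
        rw [ENNReal.mul_rpow_of_nonneg _ _ hp0.le, ← ENNReal.rpow_mul, ← ENNReal.rpow_mul,
          one_div_mul_cancel hp0', ENNReal.rpow_one, one_div, inv_mul_eq_div, mul_comm]
  -- Fubini + scaling
  have swap : ∫⁻ x, A x = Cg * I := by
    have hH : AEMeasurable
        (fun z : Euc d × ℝ => (‖D (z.2 • z.1)‖₊ : ℝ≥0∞) ^ p * ENNReal.ofReal (z.2 ^ α))
        ((volume : Measure (Euc d)).prod (volume.restrict (Ioi 1))) := by
      refine Measurable.aemeasurable ?_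
      exact (((hDc.comp (continuous_snd.smul continuous_fst)).measurable.nnnorm.coe_nnreal_ennreal).pow_const
          p).mul (ENNReal.measurable_ofReal.comp (measurable_snd.pow_const α))
    have inner : ∀ t ∈ Ioi (1:ℝ),
        ∫⁻ x, (‖D (t • x)‖₊ : ℝ≥0∞) ^ p * ENNReal.ofReal (t ^ α)
          = ENNReal.ofReal (t ^ γ) * I := by
      intro t ht
      have ht0 : (0:ℝ) < t := lt_trans one_pos ht
      rw [lintegral_mul_const' _ _ ENNReal.ofReal_ne_top,
        scaling_lemma (fun y => (‖D y‖₊ : ℝ≥0∞) ^ p) (hDm.pow_const p) ht0]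
      rw [mul_comm, ← mul_assoc, ← ENNReal.ofReal_mul (Real.rpow_nonneg ht0.le _),
        ← Real.rpow_add ht0, hγdef]
      norm_num [sub_eq_add_neg]
      rfl
    calc ∫⁻ x, A x
        = ∫⁻ t in Ioi (1:ℝ), ∫⁻ x, (‖D (t • x)‖₊ : ℝ≥0∞) ^ p * ENNReal.ofReal (t ^ α) :=
          lintegral_lintegral_swap hH
      _ = ∫⁻ t in Ioi (1:ℝ), ENNReal.ofReal (t ^ γ) * I := by
          refine setLIntegral_congr_fun measurableSet_Ioi ?_
          intro t ht
          exact inner t ht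
      _ = Cg * I := by
          rw [hCgdef]
          exact lintegral_mul_const'' I ((measurable_id'.pow_const γ).ennreal_ofReal).aemeasurable
  -- a.e. pointwise bound
  have hae : ∀ᵐ x : Euc d ∂volume, (‖(‖x‖⁻¹ • u x)‖₊ : ℝ≥0∞) ^ p ≤ N x ^ p := by
    have hne : ∀ᵐ x : Euc d ∂volume, x ≠ 0 := by
      rw [MeasureTheory.ae_iff]
      have : {x : Euc d | ¬ x ≠ 0} = {0} := by ext y; simp
      rw [this]
      exact measure_singleton 0
    filter_upwards [hne] with x hx
    exact ENNReal.rpow_le_rpow (pointwise_lemma u hx) hp0.le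
  have main : ∫⁻ x, (‖(‖x‖⁻¹ • u x)‖₊ : ℝ≥0∞) ^ p ≤ B ^ (p / q) * Cg * I := by
    calc ∫⁻ x, (‖(‖x‖⁻¹ • u x)‖₊ : ℝ≥0∞) ^ p ≤ ∫⁻ x, N x ^ p := lintegral_mono_ae hae
      _ ≤ ∫⁻ x, B ^ (p / q) * A x := lintegral_mono holder
      _ = B ^ (p / q) * (Cg * I) := by rw [lintegral_const_mul' _ _ hBpqne, swap]
      _ = B ^ (p / q) * Cg * I := by rw [mul_assoc]
  have hpne : ENNReal.ofReal p ≠ 0 := by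
    simp only [ne_eq, ENNReal.ofReal_eq_zero, not_le]; exact hp0
  have hptop : ENNReal.ofReal p ≠ ⊤ := ENNReal.ofReal_ne_top
  rw [eLpNorm_eq_lintegral_rpow_enorm_toReal hpne hptop, eLpNorm_eq_lintegral_rpow_enorm_toReal hpne hptop]
  simp only [ENNReal.toReal_ofReal hp0.le]
  calc (∫⁻ x, (‖(‖x‖⁻¹ • u x)‖₊ : ℝ≥0∞) ^ p) ^ (1/p)
      ≤ (B ^ (p / q) * Cg * I) ^ (1/p) := ENNReal.rpow_le_rpow main (by positivity)
    _ = K * I ^ (1/p) := by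
        rw [hK, ENNReal.mul_rpow_of_nonneg _ _ (by positivity : (0:ℝ) ≤ 1/p)]
    _ ≤ ENNReal.ofReal (K.toReal + 1) * I ^ (1/p) := by
        gcongr
        calc K = ENNReal.ofReal K.toReal := (ENNReal.ofReal_toReal hKne).symm
          _ ≤ ENNReal.ofReal (K.toReal + 1) := ENNReal.ofReal_le_ofReal (by linarith)

end
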